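/- Let V be a nonempty finite type with n = Fintype.card V, let r ≥ 1, and let E : Fin (r·n) → Sym2 V be a decodable multigraph on V with m = r·n edges. Then m(G) ≤ 2r − 1, where m(G) is the minimum cardinality of a loop cut of G. -/
import Mathlib


/-- `e` is a loop index at vertex `v`. -/
def IsLoopIdx {V : Type*} {m : ℕ} (E : Fin m → Sym2 V) (v : V) (e : Fin m) : Prop :=
  E e = Sym2.diag v

/-- `u` and `v` are connected in the multigraph `E` with the edge indices in `S` deleted. -/
def ConnectedMod {V : Type*} {m : ℕ} (E : Fin m → Sym2 V) (S : Finset (Fin m))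
    (u v : V) : Prop :=
  Relation.EqvGen (fun a b => ∃ e : Fin m, e ∉ S ∧ E e = s(a, b)) u v

/-- `G − S` is decodable: every vertex is connected in `G − S` to a vertex with a loop
outside `S`. -/
def DecodableMod {V : Type*} {m : ℕ} (E : Fin m → Sym2 V) (S : Finset (Fin m)) : Prop :=
  ∀ u : V, ∃ v : V, (∃ e : Fin m, e ∉ S ∧ IsLoopIdx E v e) ∧ ConnectedMod E S u v

def IsDecodable {V : Type*} {m : ℕ} (E : Fin m → Sym2 V) : Prop :=
  DecodableMod E ∅

/-- `c_x^G`: the number of `x`-element sets of edge indices whose deletion leaves a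
decodable graph. -/
noncomputable def cG {V : Type*} {m : ℕ} (E : Fin m → Sym2 V) (x : ℕ) : ℕ :=
  Set.ncard {S : Finset (Fin m) | S.card = x ∧ DecodableMod E S}

/-- `k_x^G = C(m,x) − c_x^G`. -/
noncomputable def kG {V : Type*} {m : ℕ} (E : Fin m → Sym2 V) (x : ℕ) : ℕ :=
  Nat.choose m x - cG E x

/-- `m(G)`: the minimum cardinality of a loop cut. -/
noncomputable def mCut {V : Type*} {m : ℕ} (E : Fin m → Sym2 V) : ℕ :=
  sInf {k : ℕ | ∃ S : Finset (Fin m), S.card = k ∧ ¬ DecodableMod E S}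

/-- incidence degree of `v` (a loop at `v` counts once). -/
noncomputable def dI {V : Type*} {m : ℕ} (E : Fin m → Sym2 V) (v : V) : ℕ :=
  Set.ncard {e : Fin m | v ∈ E e}

/-- `δ_I(G)`: the minimum incidence degree. -/
noncomputable def deltaI {V : Type*} {m : ℕ} (E : Fin m → Sym2 V) : ℕ :=
  sInf (Set.range (dI E))

/-- `L_G`: the number of loop indices. -/
noncomputable def LG {V : Type*} {m : ℕ} (E : Fin m → Sym2 V) : ℕ :=
  Set.ncard {e : Fin m | ∃ v : V, E e = Sym2.diag v}

/-- `δ_ℓ(v)`: the number of loop indices at `v`. -/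
noncomputable def loopsAt {V : Type*} {m : ℕ} (E : Fin m → Sym2 V) (v : V) : ℕ :=
  Set.ncard {e : Fin m | E e = Sym2.diag v}

/-- `Δ_ℓ(G)`: the maximum number of loops at a single vertex. -/
noncomputable def DeltaLoops {V : Type*} {m : ℕ} (E : Fin m → Sym2 V) : ℕ :=
  sSup (Set.range (loopsAt E))

/-- `κ_G`: the edge connectivity. -/
noncomputable def kappaG {V : Type*} {m : ℕ} (E : Fin m → Sym2 V) : ℕ :=
  sInf {k : ℕ | ∃ S : Finset (Fin m), S.card = k ∧ ∃ u v : V, ¬ ConnectedMod E S u v}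

theorem stmt7 {V : Type*} [Fintype V] [Nonempty V] {r : ℕ} (hr : 1 ≤ r)
    (E : Fin (r * Fintype.card V) → Sym2 V) (hdec : IsDecodable E) :
    mCut E ≤ 2 * r - 1 := by
  classical
  obtain ⟨u⟩ := ‹Nonempty V›
  obtain ⟨w, ⟨e0, -, he0⟩, -⟩ := hdec u
  let deg : V → ℕ := fun v => (Finset.univ.filter (fun e => v ∈ E e)).card
  have hdI : ∀ v, dI E v = deg v := by
    intro v
    rw [dI, show {e : Fin (r * Fintype.card V) | v ∈ E e}
        = ↑(Finset.univ.filter (fun e => v ∈ E e)) by ext e; simp]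
    exact Set.ncard_coe_finset _
  have hle2 : ∀ e : Fin (r * Fintype.card V), (Finset.univ.filter (fun v => v ∈ E e)).card ≤ 2 := by
    intro e
    obtain ⟨a, b, hEe⟩ := Sym2.ind (f := fun z => ∃ a b, z = s(a, b))
      (fun a b => ⟨a, b, rfl⟩) (E e)
    have hsub : Finset.univ.filter (fun v => v ∈ E e) ⊆ {a, b} := by
      intro v hv
      simp only [Finset.mem_filter, hEe, Sym2.mem_iff] at hv
      simp only [Finset.mem_insert, Finset.mem_singleton]
      tauto
    calc (Finset.univ.filter (fun v => v ∈ E e)).card ≤ ({a, b} : Finset V).card :=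
          Finset.card_le_card hsub
      _ ≤ 2 := (Finset.card_insert_le _ _).trans (by simp)
  have hsum : ∑ v, deg v < 2 * (r * Fintype.card V) := by
    have h1 : ∑ v, deg v = ∑ e : Fin (r * Fintype.card V), (Finset.univ.filter (fun v => v ∈ E e)).card := by
      simp only [deg, Finset.card_filter]
      rw [Finset.sum_comm]
    rw [h1]
    have hlt : ∑ e : Fin (r * Fintype.card V), (Finset.univ.filter (fun v => v ∈ E e)).card
        < ∑ _e : Fin (r * Fintype.card V), (2 : ℕ) := by
      apply Finset.sum_lt_sum (fun e _ => hle2 e)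
      refine ⟨e0, Finset.mem_univ _, ?_⟩
      have heq : Finset.univ.filter (fun v => v ∈ E e0) = {w} := by
        ext v
        simp only [Finset.mem_filter, Finset.mem_univ, true_and, Finset.mem_singleton]
        rw [he0]
        constructor
        · intro h; exact (Sym2.mem_iff.mp h).elim id id
        · rintro rfl; exact Sym2.mem_mk_left _ _
      rw [heq]; simp
    calc _ < ∑ _e : Fin (r * Fintype.card V), (2 : ℕ) := hlt
      _ = 2 * (r * Fintype.card V) := by simp [mul_comm]
  obtain ⟨v, hv⟩ : ∃ v, deg v ≤ 2 * r - 1 := by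
    by_contra h
    push_neg at h
    have h2 : ∀ v, 2 * r ≤ deg v := fun v => by have := h v; omega
    have h3 : Fintype.card V * (2 * r) ≤ ∑ v, deg v := by
      calc Fintype.card V * (2 * r) = ∑ _v : V, 2 * r := by
            rw [Finset.sum_const, Finset.card_univ, smul_eq_mul]
        _ ≤ _ := Finset.sum_le_sum (fun v _ => h2 v)
    have : 2 * (r * Fintype.card V) = Fintype.card V * (2 * r) := by ring
    omega
  set S : Finset (Fin (r * Fintype.card V)) := Finset.univ.filter (fun e => v ∈ E e) with hS
  have hmem : ∀ e : Fin (r * Fintype.card V), v ∈ E e → e ∈ S := by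
    intro e he; simp [hS, he]
  have hconn : ∀ a b, ConnectedMod E S a b → (a = v ↔ b = v) := by
    intro a b h
    induction h with
    | rel a b hab =>
      obtain ⟨e, heS, hE⟩ := hab
      constructor
      · rintro rfl
        exact absurd (hmem e (by rw [hE]; exact Sym2.mem_mk_left _ _)) heS
      · rintro rfl
        exact absurd (hmem e (by rw [hE]; exact Sym2.mem_mk_right _ _)) heS
    | refl a => exact Iff.rfl
    | symm a b _ ih => exact ih.symm
    | trans a b c _ _ ih1 ih2 => exact ih1.trans ih2
  have hnot : ¬ DecodableMod E S := by
    intro hd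
    obtain ⟨w', ⟨e, heS, he⟩, hc⟩ := hd v
    have hw' : w' = v := (hconn v w' hc).mp rfl
    subst hw'
    exact heS (hmem e (by rw [he]; exact Sym2.mem_mk_left _ _))
  calc mCut E ≤ S.card := Nat.sInf_le ⟨S, rfl, hnot⟩
    _ = deg v := rfl
    _ ≤ 2 * r - 1 := hv
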